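/- Let A be a preadditive category with a zero object. If the nullhomotopy structure Θ_Ch on the category Ch(A) of chain complexes satisfies the reduced interchange condition (i.e., for all composable chain maps f•, g• and all nullhomotopies α• ∈ Θ_Ch(f•), β• ∈ Θ_Ch(g•) one has α• ∘ g• = f• ∘ β•), then every chain map admitting a chain nullhomotopy is the zero map. Consequently, if A admits a nonzero null-homotopic chain map, Θ_Ch does not satisfy reduced interchange. -/

import Mathlib

open CategoryTheory CategoryTheory.Limits

noncomputable section

universe v u

variable {A : Type u} [Category.{v} A] [Preadditive A]

/-- `φ` is a chain nullhomotopy for the chain map `g`, i.e.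
`φ_n ≫ d^C_{n+1} + d^B_n ≫ φ_{n-1} = g_n` for all `n`. -/
def IsChainNullhomotopy {B C : ChainComplex A ℤ} (g : B ⟶ C)
    (φ : ∀ n : ℤ, B.X n ⟶ C.X (n+1)) : Prop :=
  ∀ n : ℤ, φ (n+1) ≫ C.d (n+1+1) (n+1) + B.d (n+1) n ≫ φ n = g.f (n+1)

variable (A) in
/-- The reduced interchange condition for the nullhomotopy structure `Θ_Ch` on `Ch(A)`:
for composable chain maps `f, g` and chain nullhomotopies `α` of `f` and `β` of `g`, one
has `α ∘ g = f ∘ β` (componentwise). -/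
def ChainReducedInterchange : Prop :=
  ∀ {A' B C : ChainComplex A ℤ} (f : A' ⟶ B) (g : B ⟶ C)
    (α : ∀ n : ℤ, A'.X n ⟶ B.X (n+1)) (β : ∀ n : ℤ, B.X n ⟶ C.X (n+1)),
    IsChainNullhomotopy f α → IsChainNullhomotopy g β →
    ∀ n : ℤ, α n ≫ g.f (n+1) = f.f n ≫ β n


/-- The shift of `B`: degree `n` part is `B_{n+1}`, differential is `-d`. -/
def shiftCx (B : ChainComplex A ℤ) : ChainComplex A ℤ where
  X n := B.X (n+1)
  d i j := -B.d (i+1) (j+1)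
  shape i j h := by
    show -B.d (i+1) (j+1) = 0
    rw [B.shape, neg_zero]
    simp only [ComplexShape.down_Rel] at h ⊢
    omega
  d_comp_d' i j k _ _ := by simp

theorem shift_id_nullhomotopy (B : ChainComplex A ℤ) :
    IsChainNullhomotopy (0 : shiftCx B ⟶ B) (fun n => 𝟙 (B.X (n+1))) := by
  intro n
  show 𝟙 (B.X (n+1+1)) ≫ B.d (n+1+1) (n+1) + (-B.d (n+1+1) (n+1)) ≫ 𝟙 (B.X (n+1)) = _
  simp
  rfl

/-- **Statement 17** (`Θ_Ch` does not satisfy the reduced interchange condition, unless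
all null-homotopic chain maps vanish).  If the nullhomotopy structure `Θ_Ch` on `Ch(A)`
satisfies the reduced interchange condition, then every chain map admitting a chain
nullhomotopy is zero; consequently, if `A` admits a nonzero null-homotopic chain map,
then `Θ_Ch` does not satisfy the reduced interchange condition. -/
theorem chain_reduced_interchange_forces_zero
    (A : Type u) [Category.{v} A] [Preadditive A] [HasZeroObject A] :
    (ChainReducedInterchange A →
      ∀ {B C : ChainComplex A ℤ} (g : B ⟶ C) (φ : ∀ n : ℤ, B.X n ⟶ C.X (n+1)),
        IsChainNullhomotopy g φ → g = 0) ∧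
    ((∃ (B C : ChainComplex A ℤ) (g : B ⟶ C) (φ : ∀ n : ℤ, B.X n ⟶ C.X (n+1)),
        IsChainNullhomotopy g φ ∧ g ≠ 0) → ¬ ChainReducedInterchange A) := by
  have main : ChainReducedInterchange A →
      ∀ {B C : ChainComplex A ℤ} (g : B ⟶ C) (φ : ∀ n : ℤ, B.X n ⟶ C.X (n+1)),
        IsChainNullhomotopy g φ → g = 0 := by
    intro h B C g φ hφ
    have key : ∀ n : ℤ, g.f (n+1) = 0 := by
      intro n
      have := h (0 : shiftCx B ⟶ B) g (fun n => 𝟙 (B.X (n+1))) φ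
        (shift_id_nullhomotopy B) hφ n
      have this2 : g.f (n+1) = (0 : shiftCx B ⟶ B).f n ≫ φ n :=
        (Category.id_comp (g.f (n+1))).symm.trans this
      simp at this2
      exact this2
    ext n
    have := key (n-1)
    rw [show n - 1 + 1 = n by omega] at this
    simpa using this
  refine ⟨main, ?_⟩
  rintro ⟨B, C, g, φ, hφ, hg⟩ hinter
  exact hg (main hinter g φ hφ)
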